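/- Let (X,≤) be a finite upper distributive join-semilattice (for every u ∈ X the principal order filter ↑u is a distributive lattice). Then: (i) (X,≤) is graded, i.e. it admits a rank function r : X → ℤ≥0 such that r(y) = r(x) + 1 whenever y covers x; and (ii) the rank function is a valuation: for all x,y ∈ X, if the meet x∧y exists then r(x) + r(y) = r(x∨y) + r(x∧y). -/

import Mathlib

/-- A preorder (reflexive transitive relation) on `X`, used as an agent's
preference over outcomes. -/
structure Pref (X : Type*) where
  rel : X → X → Prop
  refl : ∀ x, rel x x
  trans : ∀ x y z, rel x y → rel y z → rel x z

namespace Pref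

/-- Strict (asymmetric) part of a preference preorder. -/
def strict {X : Type*} (R : Pref X) (x y : X) : Prop := R.rel x y ∧ ¬ R.rel y x

/-- `t` is the unique maximum of the preorder `R`. -/
def IsTop {X : Type*} (R : Pref X) (t : X) : Prop :=
  (∀ y, R.rel t y) ∧ ∀ t', (∀ y, R.rel t' y) → t' = t

end Pref

/-- The interval `I^μ(x,y) = {z : z = μ(x,y,z)}` induced by a ternary median operation. -/
def medInterval {X : Type*} (μ : X → X → X → X) (x y : X) : Set X :=
  {z | μ x y z = z}

/-- A preorder on `X` is locally unimodal (single-peaked) w.r.t. the betweenness induced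
by the median `μ`: it has a unique maximum `t`, and any outcome lying strictly between
`t` and another outcome `y` is not worse than `y`. -/
def LocallyUnimodal {X : Type*} (μ : X → X → X → X) (R : Pref X) : Prop :=
  ∃ t, R.IsTop t ∧ ∀ y z, z ∈ medInterval μ t y → z ≠ t → ¬ R.strict y z

/-- A rich domain of locally unimodal preorders: for all `x,y` it contains a preorder
with top `x` whose upper contour set at `y` is exactly the interval `I^μ(x,y)`. -/
def RichDomain {X : Type*} (μ : X → X → X → X) (D : Set (Pref X)) : Prop :=
  (∀ R ∈ D, LocallyUnimodal μ R) ∧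
  ∀ x y : X, ∃ R ∈ D, R.IsTop x ∧ {z | R.rel z y} = medInterval μ x y

/-- Strategy-proofness of an aggregation rule on profiles drawn from the domain `D`:
no agent `i` whose true preference lies in `D` (with top `tops i`) can strictly gain
by reporting `y` instead of her top. -/
def StrategyProofOn {X N : Type*} [DecidableEq N]
    (f : (N → X) → X) (D : Set (Pref X)) : Prop :=
  ∀ prefs : N → Pref X, (∀ i, prefs i ∈ D) →
    ∀ tops : N → X, (∀ j, (prefs j).IsTop (tops j)) →
      ∀ (i : N) (y : X),
        ¬ (prefs i).strict (f (Function.update tops i y)) (f tops)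

/-- `B_μ`-monotonicity: `f(x_N)` always lies in the median interval between `x_i` and
the outcome obtained when `i` deviates to `y`. -/
def BMuMonotonic {X N : Type*} [DecidableEq N]
    (μ : X → X → X → X) (f : (N → X) → X) : Prop :=
  ∀ (x : N → X) (i : N) (y : X),
    f x ∈ medInterval μ (x i) (f (Function.update x i y))

/-- `m` is meet-irreducible: whenever `m` is the greatest lower bound of a set `Y`,
`m` itself belongs to `Y`. -/
def MeetIrred {X : Type*} [Preorder X] (m : X) : Prop :=
  ∀ Y : Set X, IsGLB Y m → m ∈ Y

/-- `j` is join-irreducible: whenever `j` is the least upper bound of a set `Y`,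
`j` itself belongs to `Y`. -/
def JoinIrred {X : Type*} [Preorder X] (j : X) : Prop :=
  ∀ Y : Set X, IsLUB Y j → j ∈ Y

/-- Monotonic `M_X`-independence of an aggregation rule. -/
def MonotonicMIndependent {X N : Type*} [Preorder X] (f : (N → X) → X) : Prop :=
  ∀ (x y : N → X) (m : X), MeetIrred m →
    {i | x i ≤ m} ⊆ {i | y i ≤ m} → f x ≤ m → f y ≤ m

/-- Upper distributivity: every principal order filter `↑u` is a distributive lattice,
expressed by the identity `x ⊔ (y ⊓ z) = (x ⊔ y) ⊓ (x ⊔ z)` for elements above a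
common lower bound `u` (meets expressed via `IsGLB`). -/
def UpperDistributive (X : Type*) [SemilatticeSup X] : Prop :=
  ∀ u x y z m₁ m₂ : X, u ≤ x → u ≤ y → u ≤ z →
    IsGLB {y, z} m₁ → IsGLB {x ⊔ y, x ⊔ z} m₂ → x ⊔ m₁ = m₂

/-- Co-coronation (meet-Helly): if the three pairwise meets of `x,y,z` exist then the
meet of `{x,y,z}` exists. -/
def MeetHelly (X : Type*) [SemilatticeSup X] : Prop :=
  ∀ x y z : X, (∃ a, IsGLB {x, y} a) → (∃ b, IsGLB {y, z} b) →
    (∃ c, IsGLB {x, z} c) → ∃ d, IsGLB ({x, y, z} : Set X) d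

/-- `μ` is the median operation: `μ(x,y,z)` is the meet of `x⊔y`, `y⊔z`, `x⊔z`. -/
def IsMedianFn {X : Type*} [SemilatticeSup X] (μ : X → X → X → X) : Prop :=
  ∀ x y z : X, IsGLB {x ⊔ y, y ⊔ z, x ⊔ z} (μ x y z)

/-- Anonymity: invariance of the rule under permutations of the agents. -/
def Anonymous {X N : Type*} (f : (N → X) → X) : Prop :=
  ∀ (x : N → X) (σ : Equiv.Perm N), f (x ∘ σ) = f x

/-- Bi-idempotence: if every agent proposes one of the two outcomes `y, z`, the rule
selects one of `y, z`. -/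
def BiIdempotent {X N : Type*} (f : (N → X) → X) : Prop :=
  ∀ (x : N → X) (y z : X), (∀ i, x i = y ∨ x i = z) → f x = y ∨ f x = z

/-- The co-majority rule: `f(x_N)` is the meet over all majority coalitions `S`
(of size at least `⌊(|N|+2)/2⌋`) of the joins `⋁_{i ∈ S} x_i`. -/
def IsCoMajority {X N : Type*} [SemilatticeSup X] [Fintype N] (f : (N → X) → X) : Prop :=
  ∀ x : N → X,
    IsGLB {z | ∃ S : Finset N, (Fintype.card N + 2) / 2 ≤ S.card ∧ IsLUB (x '' ↑S) z} (f x)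

/-- An order filter of the poset of coalitions `(P(N), ⊆)`. -/
def OrderFilterN {N : Type*} (F : Set (Set N)) : Prop :=
  ∀ S T : Set N, S ∈ F → S ⊆ T → T ∈ F

/-- The locally `m`-winning coalitions of the rule `f`. -/
def winningCoalitions {X N : Type*} [Preorder X] (f : (N → X) → X) (m : X) : Set (Set N) :=
  {T | ∃ x : N → X, {i | x i ≤ m} = T ∧ f x ≤ m}

/-- Shortest-path distance in the covering graph of a partial order. -/
noncomputable def covDist {X : Type*} [PartialOrder X] (x y : X) : ℕ :=
  sInf {n | ∃ p : ℕ → X, p 0 = x ∧ p n = y ∧ ∀ k < n, p k ⋖ p (k + 1) ∨ p (k + 1) ⋖ p k}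

namespace RankValAux

variable {X : Type*} [SemilatticeSup X] [Fintype X]

/-- An element with a unique cover (meet-irreducible). -/
def Irr (m : X) : Prop := ∃ c, m ⋖ c ∧ ∀ c', m ⋖ c' → c' = c

/-- Pairs with a common lower bound have a greatest lower bound. -/
lemma glb_exists (u a b : X) (ha : u ≤ a) (hb : u ≤ b) :
    ∃ g, IsGLB ({a, b} : Set X) g ∧ u ≤ g := by
  classical
  set S : Finset X := Finset.univ.filter (fun z => z ≤ a ∧ z ≤ b) with hS
  have huS : u ∈ S := by simp [hS, ha, hb]
  have hne : S.Nonempty := ⟨u, huS⟩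
  refine ⟨S.sup' hne id, ⟨?_, ?_⟩, Finset.le_sup' id huS⟩
  · rintro t (rfl | rfl)
    · exact Finset.sup'_le _ _ fun z hz => ((Finset.mem_filter.1 hz).2).1
    · exact Finset.sup'_le _ _ fun z hz => ((Finset.mem_filter.1 hz).2).2
  · intro z hz
    have hza : z ≤ a := hz (by simp)
    have hzb : z ≤ b := hz (by simp)
    exact Finset.le_sup' id (by simp [hS, hza, hzb])

/-- Meet-irreducibles are meet-prime. -/
lemma irr_prime (hud : UpperDistributive X) {m x y g : X} (hm : Irr m)
    (hg : IsGLB ({x, y} : Set X) g) (hgm : g ≤ m) : x ≤ m ∨ y ≤ m := by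
  by_contra hxy
  push_neg at hxy
  obtain ⟨hxm, hym⟩ := hxy
  obtain ⟨c, hc, hcu⟩ := hm
  have hgx : g ≤ x := hg.1 (by simp)
  have hgy : g ≤ y := hg.1 (by simp)
  -- c ≤ m ⊔ x
  have hmx : m < m ⊔ x := lt_of_le_of_ne le_sup_left (fun h => hxm (by rw [h]; exact le_sup_right))
  have hmy : m < m ⊔ y := lt_of_le_of_ne le_sup_left (fun h => hym (by rw [h]; exact le_sup_right))
  obtain ⟨c1, hc1, hc1le⟩ := exists_covBy_le_of_lt hmx
  obtain ⟨c2, hc2, hc2le⟩ := exists_covBy_le_of_lt hmy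
  rw [hcu c1 hc1] at hc1le
  rw [hcu c2 hc2] at hc2le
  -- the meet of m ⊔ x and m ⊔ y exists
  obtain ⟨m2, hm2, hmm2⟩ := glb_exists m (m ⊔ x) (m ⊔ y) le_sup_left le_sup_left
  have key : m ⊔ g = m2 := hud g m x y g m2 hgm hgx hgy hg hm2
  have : m ⊔ g = m := sup_eq_left.2 hgm
  rw [this] at key
  have hcm2 : c ≤ m2 := by
    apply hm2.2
    intro t ht
    rcases ht with rfl | ht
    · exact hc1le
    · rw [Set.mem_singleton_iff] at ht; subst ht; exact hc2le
  rw [← key] at hcm2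
  exact absurd hcm2 hc.lt.not_ge

/-- For a covering `x ⋖ y`, there is an irreducible above `x` not above `y`. -/
lemma exists_irr (hud : UpperDistributive X) {x y : X} (hxy : x ⋖ y) :
    ∃ m : X, Irr m ∧ x ≤ m ∧ ¬ y ≤ m := by
  classical
  set S : Finset X := Finset.univ.filter (fun z => x ≤ z ∧ ¬ y ≤ z) with hS
  have hxS : x ∈ S := by simp [hS, hxy.lt.not_ge]
  obtain ⟨m, hmS, hmax⟩ := S.exists_maximal ⟨x, hxS⟩
  rw [hS, Finset.mem_filter] at hmS
  obtain ⟨-, hxm, hym⟩ := hmS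
  have hmlt : m < m ⊔ y := lt_of_le_of_ne le_sup_left (fun h => hym (by rw [h]; exact le_sup_right))
  have hcovall : ∀ c, m ⋖ c → c = m ⊔ y := by
    intro c hc
    have hyc : y ≤ c := by
      by_contra hyc
      exact hc.lt.not_ge (hmax (by simp [hS, hxm.trans hc.lt.le, hyc]) hc.lt.le)
    have : m ⊔ y ≤ c := sup_le hc.lt.le hyc
    rcases this.lt_or_eq with h | h
    · exact (hc.2 hmlt h).elim
    · exact h.symm
  obtain ⟨c, hc, -⟩ := exists_covBy_le_of_lt hmlt
  exact ⟨m, ⟨c, hc, fun c' hc' => (hcovall c' hc').trans (hcovall c hc).symm⟩, hxm, hym⟩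

/-- Uniqueness of that irreducible. -/
lemma irr_unique (hud : UpperDistributive X) {x y : X} (hxy : x ⋖ y)
    {m m' : X} (hm : Irr m) (hxm : x ≤ m) (hym : ¬ y ≤ m)
    (hm' : Irr m') (hxm' : x ≤ m') (hym' : ¬ y ≤ m') : m = m' := by
  have key : ∀ a : X, Irr a → x ≤ a → ¬ y ≤ a → IsGLB ({a, y} : Set X) x := by
    intro a _ hxa hya
    obtain ⟨g, hg, hxg⟩ := glb_exists x a y hxa hxy.lt.le
    have hgy : g ≤ y := hg.1 (by simp)
    have hga : g ≤ a := hg.1 (by simp)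
    have hgx : g = x := by
      rcases (lt_of_le_of_ne hgy (fun h => hya (h ▸ hga))) with hlt
      rcases hxg.lt_or_eq with h | h
      · exact (hxy.2 h hlt).elim
      · exact h.symm
    rwa [hgx] at hg
  have h1 : m' ≤ m ∨ y ≤ m := irr_prime hud hm (key m' hm' hxm' hym') hxm
  have h2 : m ≤ m' ∨ y ≤ m' := irr_prime hud hm' (key m hm hxm hym) hxm'
  exact le_antisymm (h2.resolve_right hym') (h1.resolve_right hym)

open Classical in
/-- The finset of irreducibles above `x`. -/
noncomputable def U (x : X) : Finset X := Finset.univ.filter (fun m => Irr m ∧ x ≤ m)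

open Classical in
lemma mem_U {x m : X} : m ∈ U x ↔ Irr m ∧ x ≤ m := by
  simp [U]

lemma U_card_le (x : X) : (U x).card ≤ Fintype.card X :=
  Finset.card_le_card (Finset.subset_univ _)

lemma U_covBy (hud : UpperDistributive X) {x y : X} (hxy : x ⋖ y) :
    (U x).card = (U y).card + 1 := by
  classical
  obtain ⟨m₀, hm₀, hxm₀, hym₀⟩ := exists_irr hud hxy
  have hm₀U : m₀ ∉ U y := fun h => hym₀ (mem_U.1 h).2
  have : U x = insert m₀ (U y) := by
    apply Finset.ext
    intro m
    simp only [Finset.mem_insert, mem_U]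
    constructor
    · rintro ⟨hi, hxm⟩
      by_cases hym : y ≤ m
      · exact Or.inr ⟨hi, hym⟩
      · exact Or.inl (irr_unique hud hxy hi hxm hym hm₀ hxm₀ hym₀)
    · rintro (rfl | ⟨hi, hym⟩)
      · exact ⟨hm₀, hxm₀⟩
      · exact ⟨hi, hxy.lt.le.trans hym⟩
  rw [this, Finset.card_insert_of_notMem hm₀U]

lemma U_valuation (hud : UpperDistributive X) {x y g : X} (hg : IsGLB ({x, y} : Set X) g) :
    (U (x ⊔ y)).card + (U g).card = (U x).card + (U y).card := by
  classical
  have hgx : g ≤ x := hg.1 (by simp)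
  have hgy : g ≤ y := hg.1 (by simp)
  have hsup : U (x ⊔ y) = U x ∩ U y := by
    apply Finset.ext; intro m
    simp only [Finset.mem_inter, mem_U]
    constructor
    · rintro ⟨hi, h⟩
      exact ⟨⟨hi, le_sup_left.trans h⟩, ⟨hi, le_sup_right.trans h⟩⟩
    · rintro ⟨⟨hi, h1⟩, ⟨-, h2⟩⟩
      exact ⟨hi, sup_le h1 h2⟩
  have hglb : U g = U x ∪ U y := by
    apply Finset.ext; intro m
    simp only [Finset.mem_union, mem_U]
    constructor
    · rintro ⟨hi, h⟩
      rcases irr_prime hud hi hg h with h' | h'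
      · exact Or.inl ⟨hi, h'⟩
      · exact Or.inr ⟨hi, h'⟩
    · rintro (⟨hi, h⟩ | ⟨hi, h⟩)
      · exact ⟨hi, hgx.trans h⟩
      · exact ⟨hi, hgy.trans h⟩
  rw [hsup, hglb, add_comm]
  exact Finset.card_union_add_card_inter _ _

end RankValAux

/-- A finite upper distributive join-semilattice is graded: it admits a rank function
`r` increasing by exactly `1` along covering pairs, and `r` is a valuation:
if `x ⊓ y` exists then `r x + r y = r (x ⊔ y) + r (x ⊓ y)`. -/
theorem exists_rank_valuation
    {X : Type*} [SemilatticeSup X] [Fintype X] (hud : UpperDistributive X) :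
    ∃ r : X → ℕ,
      (∀ x y : X, x ⋖ y → r y = r x + 1) ∧
      ∀ x y g : X, IsGLB {x, y} g → r x + r y = r (x ⊔ y) + r g := by
  refine ⟨fun x => Fintype.card X - (RankValAux.U x).card, ?_, ?_⟩
  · intro x y hxy
    dsimp only
    have h := RankValAux.U_covBy hud hxy
    have hx := RankValAux.U_card_le (X := X) x
    omega
  · intro x y g hg
    dsimp only
    have h := RankValAux.U_valuation hud hg
    have h1 := RankValAux.U_card_le (X := X) x
    have h2 := RankValAux.U_card_le (X := X) y
    have h3 := RankValAux.U_card_le (X := X) (x ⊔ y)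
    have h4 := RankValAux.U_card_le (X := X) g
    omega
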